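/- Let μ₀ and μ₁ be probability measures on a measurable space Ω, let Y : Ω → ℝ be a measurable label taking values in {0,1}, let g : Ω → 𝒵 be a measurable feature map into a measurable space 𝒵, let h : 𝒵 → ℝ be measurable taking values in {0,1}, and set Ŷ = h ∘ g. Then err₀(Ŷ) + err₁(Ŷ) ≥ |μ₀{Y = 1} − μ₁{Y = 1}| − dTV(g♯μ₀, g♯μ₁). -/

import Mathlib

open MeasureTheory

/-- Total variation distance between two measures:
the supremum over measurable sets of the absolute difference of the probabilities. -/
noncomputable def dTV {Ω : Type*} [MeasurableSpace Ω] (P Q : Measure Ω) : ℝ :=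
  ⨆ E : {E : Set Ω // MeasurableSet E}, |(P E.1).toReal - (Q E.1).toReal|

lemma integrable_of_01 {Ω : Type*} [MeasurableSpace Ω] (μ : Measure Ω)
    [IsProbabilityMeasure μ] (f : Ω → ℝ) (hf : Measurable f)
    (h01 : ∀ ω, f ω = 0 ∨ f ω = 1) : Integrable f μ := by
  refine Integrable.mono' (integrable_const (1:ℝ)) hf.aestronglyMeasurable ?_
  filter_upwards with ω
  rcases h01 ω with h | h <;> simp [h]

lemma integral_eq_measure {Ω : Type*} [MeasurableSpace Ω] (μ : Measure Ω)
    [IsProbabilityMeasure μ] (f : Ω → ℝ) (hf : Measurable f)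
    (h01 : ∀ ω, f ω = 0 ∨ f ω = 1) :
    ∫ ω, f ω ∂μ = (μ {ω | f ω = 1}).toReal := by
  have hmeas : MeasurableSet {ω | f ω = 1} := hf (measurableSet_singleton 1)
  have hfi : f = Set.indicator {ω | f ω = 1} (fun _ => (1:ℝ)) := by
    funext ω
    rcases h01 ω with h | h <;> simp [Set.indicator_apply, h]
  rw [hfi, integral_indicator hmeas]
  simp [Measure.real]

/-- **Total variation lower bound** (Theorem 3.2, first inequality). For any predictor
`Yhat = h ∘ g` built on top of a feature map `g`, the sum of the group-wise errors
is at least the base-rate gap minus the total variation distance between the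
pushforward feature distributions. -/
theorem tv_lower_bound_fair_representation
    {Ω 𝒵 : Type*} [MeasurableSpace Ω] [MeasurableSpace 𝒵]
    (μ₀ μ₁ : Measure Ω) [IsProbabilityMeasure μ₀] [IsProbabilityMeasure μ₁]
    (Y : Ω → ℝ) (g : Ω → 𝒵) (h : 𝒵 → ℝ)
    (hY : Measurable Y) (hg : Measurable g) (hh : Measurable h)
    (hY01 : ∀ ω, Y ω = 0 ∨ Y ω = 1) (hh01 : ∀ z, h z = 0 ∨ h z = 1) :
    (∫ ω, |Y ω - h (g ω)| ∂μ₀) + (∫ ω, |Y ω - h (g ω)| ∂μ₁) ≥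
      |(μ₀ {ω | Y ω = 1}).toReal - (μ₁ {ω | Y ω = 1}).toReal| -
        dTV (Measure.map g μ₀) (Measure.map g μ₁) := by
  set Yh : Ω → ℝ := fun ω => h (g ω) with hYh
  have hYhm : Measurable Yh := hh.comp hg
  have hYh01 : ∀ ω, Yh ω = 0 ∨ Yh ω = 1 := fun ω => hh01 (g ω)
  have hE : MeasurableSet {z | h z = 1} := hh (measurableSet_singleton 1)
  -- error bounds
  have key : ∀ (μ : Measure Ω) [IsProbabilityMeasure μ],
      |(μ {ω | Y ω = 1}).toReal - (μ {ω | Yh ω = 1}).toReal| ≤ ∫ ω, |Y ω - Yh ω| ∂μ := by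
    intro μ _
    have hiY := integrable_of_01 μ Y hY hY01
    have hiYh := integrable_of_01 μ Yh hYhm hYh01
    calc |(μ {ω | Y ω = 1}).toReal - (μ {ω | Yh ω = 1}).toReal|
        = |∫ ω, Y ω ∂μ - ∫ ω, Yh ω ∂μ| := by
          rw [integral_eq_measure μ Y hY hY01, integral_eq_measure μ Yh hYhm hYh01]
      _ = |∫ ω, (Y ω - Yh ω) ∂μ| := by rw [integral_sub hiY hiYh]
      _ ≤ ∫ ω, |Y ω - Yh ω| ∂μ := by
          simpa [Real.norm_eq_abs] using
            norm_integral_le_integral_norm (μ := μ) (f := fun ω => Y ω - Yh ω)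
  have key₀ := key μ₀
  have key₁ := key μ₁
  -- dTV bound
  have hmap₀ : (μ₀ {ω | Yh ω = 1}) = (Measure.map g μ₀) {z | h z = 1} := by
    rw [Measure.map_apply hg hE]; rfl
  have hmap₁ : (μ₁ {ω | Yh ω = 1}) = (Measure.map g μ₁) {z | h z = 1} := by
    rw [Measure.map_apply hg hE]; rfl
  have hbdd : BddAbove (Set.range fun E : {E : Set 𝒵 // MeasurableSet E} =>
      |((Measure.map g μ₀) E.1).toReal - ((Measure.map g μ₁) E.1).toReal|) := by
    have : IsProbabilityMeasure (Measure.map g μ₀) := Measure.isProbabilityMeasure_map hg.aemeasurable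
    have : IsProbabilityMeasure (Measure.map g μ₁) := Measure.isProbabilityMeasure_map hg.aemeasurable
    refine ⟨1, ?_⟩
    rintro x ⟨E, rfl⟩
    have h0 : ((Measure.map g μ₀) E.1).toReal ≤ 1 := by
      have := prob_le_one (μ := Measure.map g μ₀) (s := E.1)
      exact ENNReal.toReal_le_of_le_ofReal zero_le_one (by simpa using this)
    have h1 : ((Measure.map g μ₁) E.1).toReal ≤ 1 := by
      have := prob_le_one (μ := Measure.map g μ₁) (s := E.1)
      exact ENNReal.toReal_le_of_le_ofReal zero_le_one (by simpa using this)
    have h0' : 0 ≤ ((Measure.map g μ₀) E.1).toReal := ENNReal.toReal_nonneg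
    have h1' : 0 ≤ ((Measure.map g μ₁) E.1).toReal := ENNReal.toReal_nonneg
    rw [abs_sub_le_iff]; constructor <;> linarith
  have hdTV : |(μ₀ {ω | Yh ω = 1}).toReal - (μ₁ {ω | Yh ω = 1}).toReal| ≤
      dTV (Measure.map g μ₀) (Measure.map g μ₁) := by
    rw [hmap₀, hmap₁]
    exact le_ciSup hbdd ⟨{z | h z = 1}, hE⟩
  have tri : |(μ₀ {ω | Y ω = 1}).toReal - (μ₁ {ω | Y ω = 1}).toReal| ≤
      |(μ₀ {ω | Y ω = 1}).toReal - (μ₀ {ω | Yh ω = 1}).toReal| +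
      |(μ₀ {ω | Yh ω = 1}).toReal - (μ₁ {ω | Yh ω = 1}).toReal| +
      |(μ₁ {ω | Yh ω = 1}).toReal - (μ₁ {ω | Y ω = 1}).toReal| := by
    have t1 := abs_sub_le ((μ₀ {ω | Y ω = 1}).toReal) ((μ₀ {ω | Yh ω = 1}).toReal)
      ((μ₁ {ω | Y ω = 1}).toReal)
    have t2 := abs_sub_le ((μ₀ {ω | Yh ω = 1}).toReal) ((μ₁ {ω | Yh ω = 1}).toReal)
      ((μ₁ {ω | Y ω = 1}).toReal)
    linarith
  have h1 := abs_sub_comm ((μ₁ {ω | Yh ω = 1}).toReal) ((μ₁ {ω | Y ω = 1}).toReal)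
  simp only [ge_iff_le]
  have : |(μ₀ {ω | Y ω = 1}).toReal - (μ₁ {ω | Y ω = 1}).toReal| ≤
      (∫ ω, |Y ω - Yh ω| ∂μ₀) + (∫ ω, |Y ω - Yh ω| ∂μ₁) +
      dTV (Measure.map g μ₀) (Measure.map g μ₁) := by
    rw [h1] at tri
    linarith
  linarith
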